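/- Define L(γ)(x) = γ(x) − ∫₀ˣ γ(u)/(1−u) du for x ∈ [0,1). Then: (a) for every bounded measurable g : [0,1] → ℝ with ∫₀¹ g(u) du = 0 one has L(R(g)) = g Lebesgue-almost everywhere on [0,1]; (b) for every bounded measurable γ : [0,1] → ℝ one has ∫₀¹ L(γ)(x) dx = 0 and R(L(γ)) = γ Lebesgue-almost everywhere on [0,1]. Thus L is the inverse of the isometry R. -/

import Mathlib

open MeasureTheory Filter Set intervalIntegral Topology

/-- The hazard rate derivative operator
`R(g)(x) = g(x) − (1/(1−x)) ∫ₓ¹ g(u) du`. -/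
noncomputable def hazardR (g : ℝ → ℝ) (x : ℝ) : ℝ :=
  g x - (1 / (1 - x)) * ∫ u in x..1, g u

/-- The inverse operator `L(γ)(x) = γ(x) − ∫₀ˣ γ(u)/(1−u) du`. -/
noncomputable def hazardL (γ : ℝ → ℝ) (x : ℝ) : ℝ :=
  γ x - ∫ u in (0:ℝ)..x, γ u / (1 - u)

lemma swap_aux (f φ : ℝ → ℝ) (hf : Measurable f) (hφ : Measurable φ)
    (a b : ℝ) (hab : a ≤ b)
    (hfi : IntegrableOn f (Ioc a b)) (Cφ : ℝ)
    (hφb : ∀ u ∈ Ioc a b, |φ u| ≤ Cφ) :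
    ∫ u in Ioc a b, φ u * ∫ t in Ioc a u, f t =
      ∫ t in Ioc a b, (∫ u in Ioc t b, φ u) * f t := by
  rcases eq_or_lt_of_le hab with rfl | hlt
  · simp
  have hC : 0 ≤ Cφ := le_trans (abs_nonneg _) (hφb b ⟨hlt, le_rfl⟩)
  set μ := volume.restrict (Ioc a b) with hμ
  set F : ℝ → ℝ → ℝ := fun u t => φ u * (Iic u).indicator f t with hF
  have hFm : Measurable (Function.uncurry F) := by
    have : Function.uncurry F = fun p : ℝ × ℝ =>
        φ p.1 * ({p : ℝ × ℝ | p.2 ≤ p.1}.indicator (fun q : ℝ × ℝ => f q.2) p) := by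
      ext p
      simp only [Function.uncurry, hF, indicator, mem_Iic, mem_setOf_eq]
    rw [this]
    exact (hφ.comp measurable_fst).mul
      ((Measurable.indicator (hf.comp measurable_snd)
        (measurableSet_le measurable_snd measurable_fst)))
  have hFint : Integrable (Function.uncurry F) (μ.prod μ) := by
    refine Integrable.mono' (g := fun p : ℝ × ℝ => Cφ * |f p.2|) ?_ hFm.aestronglyMeasurable ?_
    · have h1 : Integrable (fun z : ℝ × ℝ => (fun _ : ℝ => Cφ) z.1 * (fun t => |f t|) z.2)
          (μ.prod μ) := Integrable.mul_prod (integrable_const Cφ) (by simpa using hfi.norm)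
      simpa using h1
    · rw [hμ, Measure.prod_restrict]
      filter_upwards [ae_restrict_mem ((measurableSet_Ioc).prod measurableSet_Ioc)] with p hp
      rcases hp with ⟨hp1, _⟩
      simp only [Function.uncurry, hF, Real.norm_eq_abs, abs_mul]
      rcases le_or_gt p.2 p.1 with h | h
      · rw [indicator_of_mem (mem_Iic.2 h)]
        exact mul_le_mul_of_nonneg_right (hφb _ hp1) (abs_nonneg _)
      · rw [indicator_of_notMem (by simpa using h)]
        simp [mul_nonneg hC (abs_nonneg _)]
  have hswap := MeasureTheory.integral_integral_swap hFint
  have hL : ∫ u, ∫ t, F u t ∂μ ∂μ = ∫ u in Ioc a b, φ u * ∫ t in Ioc a u, f t := by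
    refine setIntegral_congr_fun measurableSet_Ioc fun u hu => ?_
    rw [hμ]
    rw [MeasureTheory.integral_const_mul, MeasureTheory.integral_indicator measurableSet_Iic,
      Measure.restrict_restrict measurableSet_Iic, Iic_inter_Ioc_of_le hu.2]
  have hR : ∫ t, ∫ u, F u t ∂μ ∂μ = ∫ t in Ioc a b, (∫ u in Ioc t b, φ u) * f t := by
    refine setIntegral_congr_fun measurableSet_Ioc fun t ht => ?_
    have h1 : ∀ u : ℝ, F u t = (Ici t).indicator φ u * f t := by
      intro u
      by_cases h : t ≤ u
      · simp [hF, indicator_of_mem, h, mem_Iic.2 h, mem_Ici.2 h]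
      · push_neg at h
        simp [hF, indicator_of_notMem, not_le.2 h, mul_comm]
    simp_rw [h1]
    rw [MeasureTheory.integral_mul_const, hμ, MeasureTheory.integral_indicator measurableSet_Ici,
      Measure.restrict_restrict measurableSet_Ici]
    have hset : Ici t ∩ Ioc a b = Icc t b := by
      ext u
      simp only [mem_inter_iff, mem_Ici, mem_Ioc, mem_Icc]
      constructor
      · rintro ⟨h1, _, h3⟩
        exact ⟨h1, h3⟩
      · rintro ⟨h1, h2⟩
        exact ⟨h1, lt_of_lt_of_le ht.1 h1, h2⟩
    rw [hset, integral_Icc_eq_integral_Ioc]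
  rw [← hL, ← hR, hswap]

lemma bddInt {h : ℝ → ℝ} (hm : Measurable h) {C : ℝ} (hb : ∀ y ∈ Icc (0:ℝ) 1, |h y| ≤ C) :
    IntegrableOn h (Icc (0:ℝ) 1) := by
  refine Integrable.mono' (integrable_const C) hm.aestronglyMeasurable ?_
  filter_upwards [ae_restrict_mem measurableSet_Icc] with y hy
  simpa [Real.norm_eq_abs] using hb y hy

lemma partA (g : ℝ → ℝ) (hgm : Measurable g) (C : ℝ)
    (hgb : ∀ y ∈ Icc (0:ℝ) 1, |g y| ≤ C)
    (hg0 : ∫ y in Icc (0:ℝ) 1, g y = 0) (x : ℝ) (hx : x ∈ Ico (0:ℝ) 1) :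
    hazardL (hazardR g) x = g x := by
  obtain ⟨hx0, hx1⟩ := hx
  have h1x : (0:ℝ) < 1 - x := by linarith
  have hgI : IntegrableOn g (Icc (0:ℝ) 1) := bddInt hgm hgb
  have hgIuv : ∀ u v : ℝ, u ∈ Icc (0:ℝ) 1 → v ∈ Icc (0:ℝ) 1 →
      IntervalIntegrable g volume u v := by
    intro u v hu hv
    rw [intervalIntegrable_iff]
    refine hgI.mono_set ?_
    rintro t ⟨h1, h2⟩
    exact ⟨le_of_lt (lt_of_le_of_lt (le_min hu.1 hv.1) h1), le_trans h2 (max_le hu.2 hv.2)⟩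
  set F : ℝ → ℝ := fun u => ∫ t in (0:ℝ)..u, g t with hFdef
  have hint01 : ∫ t in (0:ℝ)..1, g t = 0 := by
    rw [integral_of_le zero_le_one, ← integral_Icc_eq_integral_Ioc]
    exact hg0
  have hG : ∀ u ∈ Icc (0:ℝ) 1, ∫ t in u..(1:ℝ), g t = -F u := by
    intro u hu
    have h := integral_add_adjacent_intervals
      (hgIuv 0 u ⟨le_rfl, zero_le_one⟩ hu) (hgIuv u 1 hu ⟨zero_le_one, le_rfl⟩)
    rw [hint01] at h
    simp only [hFdef]
    linarith [h]
  have hFcont : ContinuousOn F (Icc (0:ℝ) 1) := by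
    have h := intervalIntegral.continuousOn_primitive_interval (a := (0:ℝ)) (b := (1:ℝ))
      (μ := volume) (f := g) (by simpa [uIcc_of_le (zero_le_one : (0:ℝ) ≤ 1)] using hgI)
    simpa [uIcc_of_le (zero_le_one : (0:ℝ) ≤ 1)] using h
  have hgx : IntegrableOn g (Ioc (0:ℝ) x) :=
    hgI.mono_set (fun t ht => ⟨ht.1.le, ht.2.trans hx1.le⟩)
  have hInt1 : IntegrableOn (fun t => (1-t)⁻¹ * g t) (Ioc (0:ℝ) x) := by
    refine Integrable.mono' (integrable_const ((1-x)⁻¹ * C))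
      ((measurable_const.sub measurable_id).inv.mul hgm).aestronglyMeasurable ?_
    filter_upwards [ae_restrict_mem measurableSet_Ioc] with t ht
    have h1t : (0:ℝ) < 1 - t := by linarith [ht.2]
    rw [Real.norm_eq_abs, abs_mul, abs_of_pos (inv_pos.2 h1t)]
    have hC0 : (0:ℝ) ≤ C := le_trans (abs_nonneg _) (hgb 0 ⟨le_rfl, zero_le_one⟩)
    exact mul_le_mul (inv_anti₀ h1x (by linarith [ht.2]))
      (hgb t ⟨ht.1.le, ht.2.trans hx1.le⟩) (abs_nonneg _) (inv_nonneg.2 h1x.le)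
  have hswap : ∫ u in (0:ℝ)..x, ((1-u)^2)⁻¹ * F u
      = (1-x)⁻¹ * F x - ∫ t in (0:ℝ)..x, (1-t)⁻¹ * g t := by
    rw [integral_of_le hx0]
    have h₁ : ∫ u in Ioc (0:ℝ) x, ((1-u)^2)⁻¹ * F u
        = ∫ u in Ioc (0:ℝ) x, ((1-u)^2)⁻¹ * ∫ t in Ioc (0:ℝ) u, g t := by
      refine setIntegral_congr_fun measurableSet_Ioc fun u hu => ?_
      simp only [hFdef]
      rw [integral_of_le hu.1.le]
    rw [h₁, swap_aux g (fun u => ((1-u)^2)⁻¹) hgm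
      ((measurable_const.sub measurable_id).pow_const 2).inv 0 x hx0 hgx (((1-x)^2)⁻¹) ?bd]
    case bd =>
      intro u hu
      have h1u : (0:ℝ) < 1 - u := by linarith [hu.2]
      rw [abs_of_pos (by positivity)]
      exact inv_anti₀ (by positivity)
        (pow_le_pow_left₀ h1x.le (by linarith [hu.2]) 2)
    have h₂ : ∀ t ∈ Ioc (0:ℝ) x, (∫ u in Ioc t x, ((1-u)^2)⁻¹) = (1-x)⁻¹ - (1-t)⁻¹ := by
      intro t ht
      rw [← integral_of_le ht.2]
      have hcont : ContinuousOn (fun u : ℝ => ((1-u)^2)⁻¹) (Icc t x) := by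
        refine ContinuousOn.inv₀ (by fun_prop) fun u hu => ?_
        have h1u : (0:ℝ) < 1 - u := by linarith [hu.2]
        positivity
      rw [intervalIntegral.integral_eq_sub_of_hasDerivAt (f := fun u => (1-u)⁻¹) ?der ?int]
      case der =>
        intro u hu
        rw [uIcc_of_le ht.2] at hu
        have h1u : (1:ℝ) - u ≠ 0 := ne_of_gt (by linarith [hu.2])
        have hd := ((hasDerivAt_id u).const_sub 1).inv h1u
        refine hd.congr_deriv ?_
        simp [id]
      case int =>
        apply hcont.intervalIntegrable_of_Icc ht.2
    rw [setIntegral_congr_fun measurableSet_Ioc (fun t ht => by rw [h₂ t ht])]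
    have hsplit : ∀ t : ℝ, ((1-x)⁻¹ - (1-t)⁻¹) * g t = (1-x)⁻¹ * g t - (1-t)⁻¹ * g t := by
      intro t; ring
    simp_rw [hsplit]
    rw [integral_sub (hgx.const_mul _) hInt1, MeasureTheory.integral_const_mul]
    have hFx : ∫ t in Ioc (0:ℝ) x, g t = F x := by
      simp only [hFdef]; rw [integral_of_le hx0]
    rw [hFx, integral_of_le hx0]
  have hRint : ∫ u in (0:ℝ)..x, hazardR g u / (1-u) = (1-x)⁻¹ * F x := by
    have hcongr : ∀ u ∈ uIcc (0:ℝ) x,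
        hazardR g u / (1-u) = (1-u)⁻¹ * g u + ((1-u)^2)⁻¹ * F u := by
      intro u hu
      rw [uIcc_of_le hx0] at hu
      have h1u : (0:ℝ) < 1 - u := by linarith [hu.2]
      rw [hazardR, hG u ⟨hu.1, hu.2.trans hx1.le⟩]
      field_simp
      ring
    rw [intervalIntegral.integral_congr hcongr]
    have hi1 : IntervalIntegrable (fun u => (1-u)⁻¹ * g u) volume 0 x := by
      rw [intervalIntegrable_iff, uIoc_of_le hx0]; exact hInt1
    have hi2 : IntervalIntegrable (fun u => ((1-u)^2)⁻¹ * F u) volume 0 x := by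
      apply ContinuousOn.intervalIntegrable
      rw [uIcc_of_le hx0]
      refine ContinuousOn.mul (ContinuousOn.inv₀ (by fun_prop) fun u hu => ?_)
        (hFcont.mono fun t ht => ⟨ht.1, ht.2.trans hx1.le⟩)
      have h1u : (0:ℝ) < 1 - u := by linarith [hu.2]
      positivity
    rw [intervalIntegral.integral_add hi1 hi2, hswap]
    ring
  simp only [hazardL]
  rw [hRint, hazardR, hG x ⟨hx0, hx1.le⟩]
  field_simp
  ring

lemma partB (γ : ℝ → ℝ) (hγm : Measurable γ) (C : ℝ)
    (hγb : ∀ y ∈ Icc (0:ℝ) 1, |γ y| ≤ C) :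
    (∫ x in Icc (0:ℝ) 1, hazardL γ x = 0) ∧
      ∀ x ∈ Ico (0:ℝ) 1, hazardR (hazardL γ) x = γ x := by
  have hC0 : (0:ℝ) ≤ C := le_trans (abs_nonneg _) (hγb 0 ⟨le_rfl, zero_le_one⟩)
  set f : ℝ → ℝ := fun t => γ t / (1 - t) with hfdef
  set Γ : ℝ → ℝ := fun y => ∫ t in (0:ℝ)..y, f t with hΓdef
  have hLfun : hazardL γ = fun y => γ y - Γ y := by
    funext y; simp only [hazardL, hΓdef, hfdef]
  have hfm : Measurable f := hγm.div (measurable_const.sub measurable_id)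
  have hγI : IntegrableOn γ (Icc (0:ℝ) 1) := bddInt hγm hγb
  have hfIb : ∀ b ∈ Ico (0:ℝ) 1, IntegrableOn f (Icc (0:ℝ) b) := by
    intro b hb
    refine Integrable.mono' (integrable_const ((1-b)⁻¹ * C)) hfm.aestronglyMeasurable ?_
    filter_upwards [ae_restrict_mem measurableSet_Icc] with t ht
    have h1t : (0:ℝ) < 1 - t := by linarith [ht.2, hb.2]
    have h1b : (0:ℝ) < 1 - b := by linarith [hb.2]
    rw [Real.norm_eq_abs, hfdef]
    simp only
    rw [abs_div, abs_of_pos h1t, div_eq_inv_mul]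
    exact mul_le_mul (inv_anti₀ h1b (by linarith [ht.2]))
      (hγb t ⟨ht.1, by linarith [ht.2, hb.2]⟩) (abs_nonneg _) (inv_nonneg.2 h1b.le)
  have hΓcont_b : ∀ b ∈ Ico (0:ℝ) 1, ContinuousOn Γ (Icc 0 b) := by
    intro b hb
    have h := intervalIntegral.continuousOn_primitive_interval (a := (0:ℝ)) (b := b)
      (μ := volume) (f := f) (by simpa [uIcc_of_le hb.1] using hfIb b hb)
    simpa [hΓdef, uIcc_of_le hb.1] using h
  -- key identity
  have hK : ∀ b ∈ Ico (0:ℝ) 1, ∫ u in Ioc (0:ℝ) b, (γ u - Γ u) = (1-b) * Γ b := by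
    intro b hb
    have hb0 : (0:ℝ) ≤ b := hb.1
    have h1b : (0:ℝ) < 1 - b := by linarith [hb.2]
    have hfb : IntegrableOn f (Ioc (0:ℝ) b) := (hfIb b hb).mono_set Ioc_subset_Icc_self
    have hsw := swap_aux f (fun _ => 1) hfm measurable_const 0 b hb0 hfb 1 (by simp)
    have hL : ∫ u in Ioc (0:ℝ) b, (fun _ => (1:ℝ)) u * ∫ t in Ioc (0:ℝ) u, f t
        = ∫ u in Ioc (0:ℝ) b, Γ u := by
      refine setIntegral_congr_fun measurableSet_Ioc fun u hu => ?_
      simp only [hΓdef, one_mul]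
      rw [integral_of_le hu.1.le]
    have hR : ∫ t in Ioc (0:ℝ) b, (∫ _ in Ioc t b, (1:ℝ)) * f t
        = ∫ t in Ioc (0:ℝ) b, (b - t) * f t := by
      refine setIntegral_congr_fun measurableSet_Ioc fun t ht => ?_
      rw [setIntegral_const]
      simp [Real.volume_Ioc, ENNReal.toReal_ofReal (by linarith [ht.2] : (0:ℝ) ≤ b - t), ht.2]
    rw [hL, hR] at hsw
    have hΓIb : IntegrableOn Γ (Ioc (0:ℝ) b) :=
      ((hΓcont_b b hb).integrableOn_Icc).mono_set Ioc_subset_Icc_self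
    have hγIb : IntegrableOn γ (Ioc (0:ℝ) b) :=
      hγI.mono_set fun t ht => ⟨ht.1.le, by linarith [ht.2, hb.2]⟩
    have hbfI : IntegrableOn (fun t => (b - t) * f t) (Ioc (0:ℝ) b) := by
      refine Integrable.mono' hfb.norm
        ((measurable_const.sub measurable_id).mul hfm).aestronglyMeasurable ?_
      filter_upwards [ae_restrict_mem measurableSet_Ioc] with t ht
      rw [Real.norm_eq_abs, abs_mul, Real.norm_eq_abs]
      have : |b - t| ≤ 1 := by
        rw [abs_of_nonneg (by linarith [ht.2])]
        linarith [ht.1, hb.2]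
      calc |b - t| * |f t| ≤ 1 * |f t| :=
            mul_le_mul_of_nonneg_right this (abs_nonneg _)
        _ = |f t| := one_mul _
    calc ∫ u in Ioc (0:ℝ) b, (γ u - Γ u)
        = (∫ u in Ioc (0:ℝ) b, γ u) - ∫ u in Ioc (0:ℝ) b, Γ u := integral_sub hγIb hΓIb
      _ = (∫ u in Ioc (0:ℝ) b, γ u) - ∫ t in Ioc (0:ℝ) b, (b - t) * f t := by rw [hsw]
      _ = ∫ t in Ioc (0:ℝ) b, (γ t - (b - t) * f t) := (integral_sub hγIb hbfI).symm
      _ = ∫ t in Ioc (0:ℝ) b, (1 - b) * f t := by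
          refine setIntegral_congr_fun measurableSet_Ioc fun t ht => ?_
          have h1t : (1:ℝ) - t ≠ 0 := ne_of_gt (by linarith [ht.2])
          simp only [hfdef]
          field_simp
          ring
      _ = (1 - b) * ∫ t in Ioc (0:ℝ) b, f t := integral_const_mul _ _
      _ = (1 - b) * Γ b := by rw [hΓdef]; simp only; rw [integral_of_le hb0]
  -- bound on Γ
  have hΓbd : ∀ b ∈ Ico (0:ℝ) 1, |Γ b| ≤ 2*C * (1-b) ^ (-(1/2) : ℝ) := by
    intro b hb
    have hb0 : (0:ℝ) ≤ b := hb.1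
    have h1b : (0:ℝ) < 1 - b := by linarith [hb.2]
    have hfib : IntervalIntegrable f volume 0 b := by
      rw [intervalIntegrable_iff, uIoc_of_le hb0]
      exact (hfIb b hb).mono_set Ioc_subset_Icc_self
    have hint_pow : IntervalIntegrable (fun t => C * (1-t) ^ (-(3:ℝ)/2)) volume 0 b := by
      apply ContinuousOn.intervalIntegrable
      rw [uIcc_of_le hb0]
      have hc1 : ContinuousOn (fun t : ℝ => 1 - t) (Icc 0 b) := by fun_prop
      refine ContinuousOn.mul continuousOn_const
        (hc1.rpow_const fun t ht => Or.inl (ne_of_gt (by linarith [ht.2] : (0:ℝ) < 1 - t)))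
    have hpt : ∀ t ∈ Icc (0:ℝ) b, |f t| ≤ C * (1-t) ^ (-(3:ℝ)/2) := by
      intro t ht
      have h1t : (0:ℝ) < 1 - t := by linarith [ht.2]
      have h1 : |f t| ≤ C * (1-t)⁻¹ := by
        rw [hfdef]; simp only
        rw [abs_div, abs_of_pos h1t, div_eq_mul_inv]
        exact mul_le_mul_of_nonneg_right
          (hγb t ⟨ht.1, by linarith [ht.2]⟩) (inv_nonneg.2 h1t.le)
      refine h1.trans (mul_le_mul_of_nonneg_left ?_ hC0)
      rw [← Real.rpow_neg_one]
      exact Real.rpow_le_rpow_of_exponent_ge h1t (by linarith [ht.1]) (by norm_num)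
    have hftc : ∫ t in (0:ℝ)..b, (1-t) ^ (-(3:ℝ)/2)
        = 2*(1-b) ^ (-(1/2):ℝ) - 2*(1-(0:ℝ)) ^ (-(1/2):ℝ) := by
      rw [intervalIntegral.integral_eq_sub_of_hasDerivAt
        (f := fun u => 2*(1-u) ^ (-(1/2):ℝ)) ?der ?int]
      case der =>
        intro u hu
        rw [uIcc_of_le hb0] at hu
        have h1u : (1:ℝ) - u ≠ 0 := ne_of_gt (by linarith [hu.2])
        have hd := (((hasDerivAt_id u).const_sub 1).rpow_const
          (p := (-(1/2):ℝ)) (Or.inl h1u)).const_mul 2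
        simp only [id_eq] at hd
        refine hd.congr_deriv ?_
        have he : (-(1/2):ℝ) - 1 = -(3:ℝ)/2 := by norm_num
        beta_reduce
        rw [he]
        ring
      case int =>
        apply ContinuousOn.intervalIntegrable
        rw [uIcc_of_le hb0]
        have hc1 : ContinuousOn (fun t : ℝ => 1 - t) (Icc 0 b) := by fun_prop
        exact hc1.rpow_const fun t ht => Or.inl (ne_of_gt (by linarith [ht.2] : (0:ℝ) < 1 - t))
    calc |Γ b| ≤ ∫ t in (0:ℝ)..b, |f t| := by
          rw [hΓdef]; simp only
          exact intervalIntegral.abs_integral_le_integral_abs hb0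
      _ ≤ ∫ t in (0:ℝ)..b, C * (1-t) ^ (-(3:ℝ)/2) :=
          intervalIntegral.integral_mono_on hb0 hfib.abs hint_pow hpt
      _ = C * ∫ t in (0:ℝ)..b, (1-t) ^ (-(3:ℝ)/2) := by
          rw [intervalIntegral.integral_const_mul]
      _ = C * (2*(1-b) ^ (-(1/2):ℝ) - 2*(1-(0:ℝ)) ^ (-(1/2):ℝ)) := by rw [hftc]
      _ ≤ 2*C * (1-b) ^ (-(1/2):ℝ) := by
          have : (1-(0:ℝ)) ^ (-(1/2):ℝ) = 1 := by norm_num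
          rw [this]
          nlinarith [Real.rpow_nonneg h1b.le (-(1/2):ℝ)]
  -- continuity and integrability of Γ on [0,1)
  have hΓcontIco : ContinuousOn Γ (Ico (0:ℝ) 1) := by
    intro y hy
    have hyb : y < (y+1)/2 := by linarith [hy.2]
    have hb1 : (y+1)/2 < 1 := by linarith [hy.2]
    have hb0 : (0:ℝ) ≤ (y+1)/2 := by linarith [hy.1]
    have hc : ContinuousOn Γ (Icc 0 ((y+1)/2)) := hΓcont_b _ ⟨hb0, hb1⟩
    refine (hc y ⟨hy.1, hyb.le⟩).mono_of_mem_nhdsWithin ?_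
    refine mem_nhdsWithin.mpr ⟨Iio ((y+1)/2), isOpen_Iio, hyb, ?_⟩
    rintro t ⟨ht1, ht2⟩
    exact ⟨ht2.1, le_of_lt ht1⟩
  have hrestr : volume.restrict (Icc (0:ℝ) 1) = volume.restrict (Ico (0:ℝ) 1) :=
    (Measure.restrict_congr_set Ico_ae_eq_Icc).symm
  have hrestr2 : volume.restrict (Ico (0:ℝ) 1) = volume.restrict (Ioc (0:ℝ) 1) := by
    rw [Measure.restrict_congr_set Ico_ae_eq_Icc, Measure.restrict_congr_set Ioc_ae_eq_Icc]
  have hΓI : IntegrableOn Γ (Icc (0:ℝ) 1) := by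
    rw [IntegrableOn, hrestr]
    refine Integrable.mono' (g := fun y => 2*C * (1-y) ^ (-(1/2):ℝ)) ?_
      (hΓcontIco.aestronglyMeasurable measurableSet_Ico) ?_
    · have h1 : IntervalIntegrable (fun y : ℝ => (1-y) ^ (-(1/2):ℝ)) volume 0 1 := by
        have := (intervalIntegral.intervalIntegrable_rpow'
          (a := (0:ℝ)) (b := (1:ℝ)) (r := (-(1/2):ℝ)) (by norm_num)).comp_sub_left 1
        simpa using this.symm
      have h2 := (h1.const_mul (2*C)).1
      rw [intervalIntegrable_iff, uIoc_of_le zero_le_one] at h1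
      rw [show (volume.restrict (Ico (0:ℝ) 1)) = volume.restrict (Ioc (0:ℝ) 1) from hrestr2]
      exact h1.const_mul (2*C)
    · rw [← hrestr, hrestr]
      filter_upwards [ae_restrict_mem measurableSet_Ico] with y hy
      rw [Real.norm_eq_abs]
      exact hΓbd y hy
  have hLI : IntegrableOn (fun y => γ y - Γ y) (Icc (0:ℝ) 1) := hγI.sub hΓI
  -- the limit argument
  set Ψ : ℝ → ℝ := fun y => ∫ u in (0:ℝ)..y, (γ u - Γ u) with hΨdef
  have hΨc : ContinuousOn Ψ (Icc (0:ℝ) 1) := by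
    have h := intervalIntegral.continuousOn_primitive_interval (a := (0:ℝ)) (b := (1:ℝ))
      (μ := volume) (f := fun u => γ u - Γ u)
      (by simpa [uIcc_of_le (zero_le_one : (0:ℝ) ≤ 1)] using hLI)
    simpa [hΨdef, uIcc_of_le (zero_le_one : (0:ℝ) ≤ 1)] using h
  haveI : (𝓝[Ioo (0:ℝ) 1] 1).NeBot := by
    rw [nhdsWithin_Ioo_eq_nhdsLT zero_lt_one]
    infer_instance
  have htends1 : Tendsto Ψ (𝓝[Ioo (0:ℝ) 1] 1) (𝓝 (Ψ 1)) :=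
    (hΨc 1 ⟨zero_le_one, le_rfl⟩).mono_left (nhdsWithin_mono 1 Ioo_subset_Icc_self)
  have htends2 : Tendsto (fun b => (1-b) * Γ b) (𝓝[Ioo (0:ℝ) 1] 1) (𝓝 0) := by
    apply squeeze_zero_norm' (a := fun b => 2*C * Real.sqrt (1-b))
    · filter_upwards [eventually_mem_nhdsWithin] with b hb
      have h1b : (0:ℝ) < 1 - b := by linarith [hb.2]
      rw [Real.norm_eq_abs, abs_mul, abs_of_pos h1b]
      calc (1-b) * |Γ b| ≤ (1-b) * (2*C * (1-b) ^ (-(1/2):ℝ)) :=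
            mul_le_mul_of_nonneg_left (hΓbd b ⟨hb.1.le, hb.2⟩) h1b.le
        _ = 2*C * ((1-b) * (1-b) ^ (-(1/2):ℝ)) := by ring
        _ = 2*C * Real.sqrt (1-b) := by
            congr 1
            rw [Real.sqrt_eq_rpow]
            nth_rewrite 1 [← Real.rpow_one (1-b)]
            rw [← Real.rpow_add h1b]
            norm_num
    · have hc : Continuous fun b : ℝ => 2*C * Real.sqrt (1-b) := by fun_prop
      have := hc.tendsto 1
      simp only [sub_self, Real.sqrt_zero, mul_zero] at this
      exact this.mono_left nhdsWithin_le_nhds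
  have hcongr' : Ψ =ᶠ[𝓝[Ioo (0:ℝ) 1] 1] fun b => (1-b) * Γ b := by
    filter_upwards [eventually_mem_nhdsWithin] with b hb
    rw [hΨdef]
    simp only
    rw [integral_of_le hb.1.le]
    exact hK b ⟨hb.1.le, hb.2⟩
  have hΨ1 : Ψ 1 = 0 := tendsto_nhds_unique (htends1.congr' hcongr') htends2
  constructor
  · rw [hLfun, integral_Icc_eq_integral_Ioc, ← integral_of_le zero_le_one]
    exact hΨ1
  · intro x hx
    have hx0 : (0:ℝ) ≤ x := hx.1
    have h1x : (0:ℝ) < 1 - x := by linarith [hx.2]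
    have hi1 : IntervalIntegrable (fun y => γ y - Γ y) volume 0 x := by
      rw [intervalIntegrable_iff, uIoc_of_le hx0]
      exact hLI.mono_set fun t ht => ⟨ht.1.le, by linarith [ht.2, hx.2]⟩
    have hi2 : IntervalIntegrable (fun y => γ y - Γ y) volume x 1 := by
      rw [intervalIntegrable_iff, uIoc_of_le hx.2.le]
      exact hLI.mono_set fun t ht => ⟨by linarith [ht.1, hx0], ht.2⟩
    have hadd := integral_add_adjacent_intervals hi1 hi2
    have h0x : ∫ u in (0:ℝ)..x, (γ u - Γ u) = (1-x) * Γ x := by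
      rw [integral_of_le hx0]; exact hK x hx
    have h01 : ∫ u in (0:ℝ)..1, (γ u - Γ u) = 0 := hΨ1
    have hx1int : ∫ u in x..(1:ℝ), (γ u - Γ u) = -((1-x) * Γ x) := by
      rw [h0x, h01] at hadd
      linarith
    rw [hazardR, hLfun]
    simp only
    rw [hx1int]
    field_simp
    ring

/-- **L is the inverse of R.**
(a) for every bounded measurable `g : [0,1] → ℝ` with `∫₀¹ g = 0` one has `L(R(g)) = g`
Lebesgue-a.e. on `[0,1]`;
(b) for every bounded measurable `γ : [0,1] → ℝ` one has `∫₀¹ L(γ) = 0` and `R(L(γ)) = γ`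
Lebesgue-a.e. on `[0,1]`. -/
theorem statement11
    (g γ : ℝ → ℝ) (hgm : Measurable g) (hγm : Measurable γ)
    (C : ℝ) (hgb : ∀ y ∈ Set.Icc (0:ℝ) 1, |g y| ≤ C) (hγb : ∀ y ∈ Set.Icc (0:ℝ) 1, |γ y| ≤ C)
    (hg0 : ∫ y in Set.Icc (0:ℝ) 1, g y = 0) :
    (∀ᵐ x ∂(volume.restrict (Set.Icc (0:ℝ) 1)), hazardL (hazardR g) x = g x) ∧
    (∫ x in Set.Icc (0:ℝ) 1, hazardL γ x = 0) ∧
    (∀ᵐ x ∂(volume.restrict (Set.Icc (0:ℝ) 1)), hazardR (hazardL γ) x = γ x) := by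
  have hae : ∀ᵐ x ∂volume.restrict (Icc (0:ℝ) 1), x ∈ Ico (0:ℝ) 1 := by
    rw [← Measure.restrict_congr_set Ico_ae_eq_Icc]
    exact ae_restrict_mem measurableSet_Ico
  obtain ⟨hB1, hB2⟩ := partB γ hγm C hγb
  refine ⟨?_, hB1, ?_⟩
  · filter_upwards [hae] with x hx
    exact partA g hgm C hgb hg0 x hx
  · filter_upwards [hae] with x hx
    exact hB2 x hx
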